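/- arXiv:2010.08703 — 3 statements merged into one kernel-verified Lean document; each statement's English description precedes it below -/
import Mathlib

section
/- Let θ̂₁, θ̂₂ ∈ ℝ, κ > 1, and positive weights τ_max, τ_min > 0. Let θ̂_max = max(|θ̂₁|,|θ̂₂|) and θ̂_min = min(|θ̂₁|,|θ̂₂|), with τ_max, τ_min the weights attached to the coordinate achieving the max and min respectively. If θ̂_max − κθ̂_min > 0, then the minimum over all (a₁,a₂) in the set {(a₁,a₂) : max(|a₁|,|a₂|) ≤ κ·min(|a₁|,|a₂|)} of τ_max⁻¹·(θ̂_max − a_max)² + τ_min⁻¹·(θ̂_min − a_min)² (where a_max, a_min are matched to the same coordinates) equals (θ̂_max − κθ̂_min)²/(τ_max + κ²τ_min). -/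
lemma stmt0_aux (M m κ τmax τmin a1 a2 : ℝ) (hκ0 : 0 < κ) (hτ1 : 0 < τmax)
    (hτ2 : 0 < τmin) (hm0 : 0 ≤ m) (hM0 : 0 < M) (h : 0 < M - κ * m)
    (hc1 : |a1| ≤ κ * |a2|) :
    (M - κ * m) ^ 2 / (τmax + κ ^ 2 * τmin) ≤
      τmax⁻¹ * (M - a1) ^ 2 + τmin⁻¹ * (m - a2) ^ 2 := by
  have hD : (0:ℝ) < τmax + κ ^ 2 * τmin := by positivity
  have e1 : (M - |a1|) ^ 2 ≤ (M - a1) ^ 2 := by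
    nlinarith [mul_nonneg hM0.le (sub_nonneg.mpr (le_abs_self a1)), sq_abs a1]
  have e2 : (|a2| - m) ^ 2 ≤ (m - a2) ^ 2 := by
    nlinarith [mul_nonneg hm0 (sub_nonneg.mpr (le_abs_self a2)), sq_abs a2]
  rw [div_le_iff₀ hD]
  have hcs : ((M - |a1|) + κ * (|a2| - m)) ^ 2 ≤
      (τmax⁻¹ * (M - |a1|) ^ 2 + τmin⁻¹ * (|a2| - m) ^ 2) * (τmax + κ ^ 2 * τmin) := by
    rw [← sub_nonneg]
    have hid : (τmax⁻¹ * (M - |a1|) ^ 2 + τmin⁻¹ * (|a2| - m) ^ 2) * (τmax + κ ^ 2 * τmin)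
        - ((M - |a1|) + κ * (|a2| - m)) ^ 2
        = (κ * τmin * (M - |a1|) - τmax * (|a2| - m)) ^ 2 / (τmax * τmin) := by
      field_simp
      ring
    rw [hid]; positivity
  have hsum : M - κ * m ≤ (M - |a1|) + κ * (|a2| - m) := by linarith
  have hsq : (M - κ * m) ^ 2 ≤ ((M - |a1|) + κ * (|a2| - m)) ^ 2 :=
    pow_le_pow_left₀ h.le hsum 2
  have mono : (τmax⁻¹ * (M - |a1|) ^ 2 + τmin⁻¹ * (|a2| - m) ^ 2) * (τmax + κ ^ 2 * τmin)
      ≤ (τmax⁻¹ * (M - a1) ^ 2 + τmin⁻¹ * (m - a2) ^ 2) * (τmax + κ ^ 2 * τmin) := by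
    apply mul_le_mul_of_nonneg_right _ hD.le
    exact add_le_add (mul_le_mul_of_nonneg_left e1 (inv_pos.mpr hτ1).le)
      (mul_le_mul_of_nonneg_left e2 (inv_pos.mpr hτ2).le)
  linarith

/-- The minimum weighted squared distance from the point
`(θ̂_max, θ̂_min)` (with matched weights `τ_max, τ_min`) to the relative-difference
null region `{(a₁,a₂) : max(|a₁|,|a₂|) ≤ κ · min(|a₁|,|a₂|)}` equals
`(θ̂_max − κθ̂_min)² / (τ_max + κ²τ_min)`, whenever `θ̂_max − κθ̂_min > 0`. -/
theorem stmt0 (t1 t2 κ τmax τmin : ℝ) (hκ : 1 < κ) (hτ1 : 0 < τmax) (hτ2 : 0 < τmin)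
    (h : max |t1| |t2| - κ * min |t1| |t2| > 0) :
    IsLeast {d : ℝ | ∃ a1 a2 : ℝ, max |a1| |a2| ≤ κ * min |a1| |a2| ∧
        d = τmax⁻¹ * (max |t1| |t2| - a1) ^ 2 + τmin⁻¹ * (min |t1| |t2| - a2) ^ 2}
      ((max |t1| |t2| - κ * min |t1| |t2|) ^ 2 / (τmax + κ ^ 2 * τmin)) := by
  have hm0 : 0 ≤ min |t1| |t2| := le_min (abs_nonneg _) (abs_nonneg _)
  have hκ0 : (0:ℝ) < κ := lt_trans one_pos hκ
  have hM0 : 0 < max |t1| |t2| := by nlinarith [mul_nonneg hκ0.le hm0]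
  have hD : (0:ℝ) < τmax + κ ^ 2 * τmin := by positivity
  constructor
  · -- membership
    set M := max |t1| |t2| with hMdef
    set m := min |t1| |t2| with hmdef
    set s := (κ * τmin * M + τmax * m) / (τmax + κ ^ 2 * τmin) with hsdef
    have hs0 : 0 ≤ s := by
      apply div_nonneg _ hD.le
      nlinarith [mul_pos (mul_pos hκ0 hτ2) hM0, mul_nonneg hτ1.le hm0]
    refine ⟨κ * s, s, ?_, ?_⟩
    · have h1 : |κ * s| = κ * s := abs_of_nonneg (by positivity)
      have h2 : |s| = s := abs_of_nonneg hs0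
      rw [h1, h2, max_eq_left (by nlinarith), min_eq_right (by nlinarith)]
    · rw [hsdef]
      field_simp
      ring
  · -- lower bound
    rintro d ⟨a1, a2, hc, rfl⟩
    have hc1 : |a1| ≤ κ * |a2| :=
      le_trans (le_max_left _ _) (le_trans hc (by
        have := min_le_right |a1| |a2|
        nlinarith))
    exact stmt0_aux _ _ _ _ _ a1 a2 hκ0 hτ1 hτ2 hm0 hM0 h hc1
end

section
/- Let (Z₁, Z₂) be bivariate normal with mean 0 and covariance diag(s₁², s₂²), s₁, s₂ > 0, and let κ > 1. Define T = (max(|Z₁|,|Z₂|) − κ·min(|Z₁|,|Z₂|))/√(s_max² + κ²s_min²), where s_max² is the variance of the coordinate achieving the max and s_min² that achieving the min. Then for every t > 0, P(T > t) = P(W₁₁ > t, W₁₂ > t) + P(W₁₁ < −t, W₁₂ < −t) + P(W₂₁ > t, W₂₂ > t) + P(W₂₁ < −t, W₂₂ < −t), where W₁₁ = (Z₁ − κZ₂)/√(s₁² + κ²s₂²), W₁₂ = (Z₁ + κZ₂)/√(s₁² + κ²s₂²), W₂₁ = (Z₂ − κZ₁)/√(κ²s₁² + s₂²), W₂₂ =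 (Z₂ + κZ₁)/√(κ²s₁² + s₂²). -/
open MeasureTheory ProbabilityTheory

/-- Conjunction of two tail conditions as one abs condition. -/
private lemma conj_lt_iff (x c t d : ℝ) (hd : 0 < d) :
    (t < (x - c) / d ∧ t < (x + c) / d) ↔ t * d < x - |c| := by
  rw [lt_div_iff₀ hd, lt_div_iff₀ hd]
  rcases abs_cases c with ⟨h, _⟩ | ⟨h, _⟩ <;> rw [h] <;>
    constructor <;> (first | (rintro ⟨h1, h2⟩; linarith) | (intro h'; exact ⟨by linarith, by linarith⟩))

private lemma conj_lt_iff' (x c t d : ℝ) (hd : 0 < d) :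
    ((x - c) / d < -t ∧ (x + c) / d < -t) ↔ t * d < -x - |c| := by
  rw [div_lt_iff₀ hd, div_lt_iff₀ hd]
  rcases abs_cases c with ⟨h, _⟩ | ⟨h, _⟩ <;> rw [h] <;>
    constructor <;> (first | (rintro ⟨h1, h2⟩; linarith) | (intro h'; exact ⟨by linarith, by linarith⟩))

private lemma abs_lt_of (x y t κ d : ℝ) (hd : 0 < d) (ht : 0 < t) (hκ : 1 < κ)
    (h : t * d < x - |κ * y|) : |y| < |x| := by
  rw [abs_mul, abs_of_pos (by linarith : (0:ℝ) < κ)] at h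
  have h1 : |y| ≤ κ * |y| := by nlinarith [abs_nonneg y]
  have h2 : 0 < t * d := mul_pos ht hd
  calc |y| ≤ κ * |y| := h1
    _ < x := by linarith
    _ ≤ |x| := le_abs_self x

private lemma key (x y t κ d1 d2 : ℝ) (hd1 : 0 < d1) (hd2 : 0 < d2) (ht : 0 < t) (hκ : 1 < κ) :
    (t < (max |x| |y| - κ * min |x| |y|) / (if |y| ≤ |x| then d1 else d2)) ↔
      ((t * d1 < x - |κ * y| ∨ t * d1 < -x - |κ * y|) ∨
       (t * d2 < y - |κ * x| ∨ t * d2 < -y - |κ * x|)) := by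
  have habs1 : |κ * y| = κ * |y| := by rw [abs_mul, abs_of_pos (by linarith : (0:ℝ) < κ)]
  have habs2 : |κ * x| = κ * |x| := by rw [abs_mul, abs_of_pos (by linarith : (0:ℝ) < κ)]
  have htd1 : 0 < t * d1 := mul_pos ht hd1
  have htd2 : 0 < t * d2 := mul_pos ht hd2
  have hκx : |x| ≤ κ * |x| := by nlinarith [abs_nonneg x]
  have hκy : |y| ≤ κ * |y| := by nlinarith [abs_nonneg y]
  rw [habs1, habs2]
  split_ifs with h
  · rw [max_eq_left h, min_eq_right h, lt_div_iff₀ hd1]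
    constructor
    · intro h'
      left
      rcases abs_cases x with ⟨hx, _⟩ | ⟨hx, _⟩
      · left; linarith
      · right; linarith
    · rintro ((h' | h') | (h' | h'))
      · linarith [le_abs_self x]
      · linarith [neg_abs_le x]
      · exfalso; linarith [le_abs_self y]
      · exfalso; linarith [neg_abs_le y]
  · push_neg at h
    rw [max_eq_right h.le, min_eq_left h.le, lt_div_iff₀ hd2]
    constructor
    · intro h'
      right
      rcases abs_cases y with ⟨hy, _⟩ | ⟨hy, _⟩
      · left; linarith
      · right; linarith
    · rintro ((h' | h') | (h' | h'))
      · exfalso; linarith [le_abs_self x]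
      · exfalso; linarith [neg_abs_le x]
      · linarith [le_abs_self y]
      · linarith [neg_abs_le y]

/-- For independent centered Gaussians `Z₁ ~ N(0,s₁²)`, `Z₂ ~ N(0,s₂²)`
and `κ > 1`, `t > 0`, the tail probability of
`T = (max(|Z₁|,|Z₂|) − κ·min(|Z₁|,|Z₂|))/√(s_max² + κ²s_min²)` decomposes exactly into
the four wedge probabilities given by `W₁₁, W₁₂, W₂₁, W₂₂`. -/
theorem stmt4 {Ω : Type*} [MeasurableSpace Ω] (μ : Measure Ω) [IsProbabilityMeasure μ]
    (Z1 Z2 : Ω → ℝ) (s1 s2 κ t : ℝ) (hs1 : 0 < s1) (hs2 : 0 < s2) (hκ : 1 < κ)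
    (ht : 0 < t) (hm1 : Measurable Z1) (hm2 : Measurable Z2)
    (hZ1 : μ.map Z1 = gaussianReal 0 (Real.toNNReal (s1 ^ 2)))
    (hZ2 : μ.map Z2 = gaussianReal 0 (Real.toNNReal (s2 ^ 2)))
    (hindep : IndepFun Z1 Z2 μ) :
    μ {ω | t < (max |Z1 ω| |Z2 ω| - κ * min |Z1 ω| |Z2 ω|) /
        Real.sqrt (if |Z2 ω| ≤ |Z1 ω| then s1 ^ 2 + κ ^ 2 * s2 ^ 2
                   else s2 ^ 2 + κ ^ 2 * s1 ^ 2)} =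
      μ {ω | t < (Z1 ω - κ * Z2 ω) / Real.sqrt (s1 ^ 2 + κ ^ 2 * s2 ^ 2) ∧
             t < (Z1 ω + κ * Z2 ω) / Real.sqrt (s1 ^ 2 + κ ^ 2 * s2 ^ 2)} +
      μ {ω | (Z1 ω - κ * Z2 ω) / Real.sqrt (s1 ^ 2 + κ ^ 2 * s2 ^ 2) < -t ∧
             (Z1 ω + κ * Z2 ω) / Real.sqrt (s1 ^ 2 + κ ^ 2 * s2 ^ 2) < -t} +
      μ {ω | t < (Z2 ω - κ * Z1 ω) / Real.sqrt (κ ^ 2 * s1 ^ 2 + s2 ^ 2) ∧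
             t < (Z2 ω + κ * Z1 ω) / Real.sqrt (κ ^ 2 * s1 ^ 2 + s2 ^ 2)} +
      μ {ω | (Z2 ω - κ * Z1 ω) / Real.sqrt (κ ^ 2 * s1 ^ 2 + s2 ^ 2) < -t ∧
             (Z2 ω + κ * Z1 ω) / Real.sqrt (κ ^ 2 * s1 ^ 2 + s2 ^ 2) < -t} := by
  set d1 : ℝ := Real.sqrt (s1 ^ 2 + κ ^ 2 * s2 ^ 2) with hd1def
  set d2 : ℝ := Real.sqrt (κ ^ 2 * s1 ^ 2 + s2 ^ 2) with hd2def
  have hd1 : 0 < d1 := Real.sqrt_pos.mpr (by positivity)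
  have hd2 : 0 < d2 := Real.sqrt_pos.mpr (by positivity)
  set S1 := {ω | t < (Z1 ω - κ * Z2 ω) / d1 ∧ t < (Z1 ω + κ * Z2 ω) / d1} with hS1
  set S2 := {ω | (Z1 ω - κ * Z2 ω) / d1 < -t ∧ (Z1 ω + κ * Z2 ω) / d1 < -t} with hS2
  set S3 := {ω | t < (Z2 ω - κ * Z1 ω) / d2 ∧ t < (Z2 ω + κ * Z1 ω) / d2} with hS3
  set S4 := {ω | (Z2 ω - κ * Z1 ω) / d2 < -t ∧ (Z2 ω + κ * Z1 ω) / d2 < -t} with hS4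
  have hsqrt2 : Real.sqrt (s2 ^ 2 + κ ^ 2 * s1 ^ 2) = d2 := by rw [hd2def, add_comm]
  -- characterizations
  have c1 : ∀ ω, ω ∈ S1 ↔ t * d1 < Z1 ω - |κ * Z2 ω| := fun ω =>
    conj_lt_iff (Z1 ω) (κ * Z2 ω) t d1 hd1
  have c2 : ∀ ω, ω ∈ S2 ↔ t * d1 < -Z1 ω - |κ * Z2 ω| := fun ω =>
    conj_lt_iff' (Z1 ω) (κ * Z2 ω) t d1 hd1
  have c3 : ∀ ω, ω ∈ S3 ↔ t * d2 < Z2 ω - |κ * Z1 ω| := fun ω =>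
    conj_lt_iff (Z2 ω) (κ * Z1 ω) t d2 hd2
  have c4 : ∀ ω, ω ∈ S4 ↔ t * d2 < -Z2 ω - |κ * Z1 ω| := fun ω =>
    conj_lt_iff' (Z2 ω) (κ * Z1 ω) t d2 hd2
  -- union equality
  have hunion : {ω | t < (max |Z1 ω| |Z2 ω| - κ * min |Z1 ω| |Z2 ω|) /
        Real.sqrt (if |Z2 ω| ≤ |Z1 ω| then s1 ^ 2 + κ ^ 2 * s2 ^ 2
                   else s2 ^ 2 + κ ^ 2 * s1 ^ 2)} = (S1 ∪ S2) ∪ (S3 ∪ S4) := by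
    ext ω
    simp only [Set.mem_setOf_eq, Set.mem_union, apply_ite Real.sqrt, hsqrt2]
    rw [c1 ω, c2 ω, c3 ω, c4 ω]
    exact key (Z1 ω) (Z2 ω) t κ d1 d2 hd1 hd2 ht hκ
  -- measurability
  have hf1 : Measurable fun ω => (Z1 ω - κ * Z2 ω) / d1 := (hm1.sub (hm2.const_mul κ)).div_const _
  have hf2 : Measurable fun ω => (Z1 ω + κ * Z2 ω) / d1 := (hm1.add (hm2.const_mul κ)).div_const _
  have hf3 : Measurable fun ω => (Z2 ω - κ * Z1 ω) / d2 := (hm2.sub (hm1.const_mul κ)).div_const _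
  have hf4 : Measurable fun ω => (Z2 ω + κ * Z1 ω) / d2 := (hm2.add (hm1.const_mul κ)).div_const _
  have m1 : MeasurableSet S1 :=
    (measurableSet_lt measurable_const hf1).inter (measurableSet_lt measurable_const hf2)
  have m2 : MeasurableSet S2 :=
    (measurableSet_lt hf1 measurable_const).inter (measurableSet_lt hf2 measurable_const)
  have m3 : MeasurableSet S3 :=
    (measurableSet_lt measurable_const hf3).inter (measurableSet_lt measurable_const hf4)
  have m4 : MeasurableSet S4 :=
    (measurableSet_lt hf3 measurable_const).inter (measurableSet_lt hf4 measurable_const)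
  -- disjointness
  have d12 : Disjoint S1 S2 := by
    rw [Set.disjoint_left]
    rintro ω ⟨h1, _⟩ ⟨h2, _⟩
    linarith
  have d34 : Disjoint S3 S4 := by
    rw [Set.disjoint_left]
    rintro ω ⟨h1, _⟩ ⟨h2, _⟩
    linarith
  have hA : ∀ ω, ω ∈ S1 → |Z2 ω| < |Z1 ω| := fun ω h =>
    abs_lt_of (Z1 ω) (Z2 ω) t κ d1 hd1 ht hκ ((c1 ω).mp h)
  have hB : ∀ ω, ω ∈ S2 → |Z2 ω| < |Z1 ω| := fun ω h => by
    have hb := abs_lt_of (-(Z1 ω)) (Z2 ω) t κ d1 hd1 ht hκ ((c2 ω).mp h)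
    rwa [abs_neg] at hb
  have hC : ∀ ω, ω ∈ S3 → |Z1 ω| < |Z2 ω| := fun ω h =>
    abs_lt_of (Z2 ω) (Z1 ω) t κ d2 hd2 ht hκ ((c3 ω).mp h)
  have hD : ∀ ω, ω ∈ S4 → |Z1 ω| < |Z2 ω| := fun ω h => by
    have hb := abs_lt_of (-(Z2 ω)) (Z1 ω) t κ d2 hd2 ht hκ ((c4 ω).mp h)
    rwa [abs_neg] at hb
  have dL : Disjoint (S1 ∪ S2) (S3 ∪ S4) := by
    rw [Set.disjoint_left]
    rintro ω (h | h) (h' | h') <;>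
      [ exact absurd (hC ω h') (not_lt.mpr (hA ω h).le);
        exact absurd (hD ω h') (not_lt.mpr (hA ω h).le);
        exact absurd (hC ω h') (not_lt.mpr (hB ω h).le);
        exact absurd (hD ω h') (not_lt.mpr (hB ω h).le)]
  rw [hunion, measure_union dL (m3.union m4), measure_union d12 m2, measure_union d34 m4]
  ring
end

section
/- Let κ > 1 and τ₁, τ₂ > 0. For (θ̂₁, θ̂₂) in the alternative region Θ₁^{P/N,κ} (i.e., not in Θ₀^{P/N,κ} = {0 < κ⁻¹θ₁ ≤ θ₂ ≤ κθ₁} ∪ {κθ₁ ≤ θ₂ ≤ κ⁻¹θ₁ < 0}), the minimum over (a₁,a₂) ∈ Θ₀^{P/N,κ} of τ₁⁻¹(θ̂₁ − a₁)² + τ₂⁻¹(θ̂₂ − a₂)² equals min{(θ̂₁ − κθ̂₂)²/(τ₁ + κ²τ₂), (κθ̂₁ − θ̂₂)²/(κ²τ₁ + τ₂)}. -/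
set_option maxHeartbeats 1000000

private lemma key_id (κ τ1 τ2 t1 t2 u : ℝ) (hκ : 0 < κ) (h1 : 0 < τ1) (h2 : 0 < τ2) :
    τ1⁻¹ * (t1 - u) ^ 2 + τ2⁻¹ * (t2 - κ * u) ^ 2
      = (κ * t1 - t2) ^ 2 / (κ ^ 2 * τ1 + τ2)
        + (τ1⁻¹ + κ ^ 2 * τ2⁻¹) * (u - (τ2 * t1 + κ * τ1 * t2) / (τ2 + κ ^ 2 * τ1)) ^ 2 := by
  have h3 : τ2 + κ ^ 2 * τ1 ≠ 0 := by positivity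
  have h4 : κ ^ 2 * τ1 + τ2 ≠ 0 := by positivity
  field_simp
  ring

private lemma cs_ineq (κ τ1 τ2 x y : ℝ) (h1 : 0 < τ1) (h2 : 0 < τ2) :
    (κ * x - y) ^ 2 / (κ ^ 2 * τ1 + τ2) ≤ τ1⁻¹ * x ^ 2 + τ2⁻¹ * y ^ 2 := by
  have key : τ1⁻¹ * x ^ 2 + τ2⁻¹ * y ^ 2 - (κ * x - y) ^ 2 / (κ ^ 2 * τ1 + τ2)
      = (κ * τ1 * y + τ2 * x) ^ 2 / (τ1 * τ2 * (κ ^ 2 * τ1 + τ2)) := by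
    have h3 : κ ^ 2 * τ1 + τ2 ≠ 0 := by positivity
    field_simp
    ring
  have h5 : (0:ℝ) ≤ (κ * τ1 * y + τ2 * x) ^ 2 / (τ1 * τ2 * (κ ^ 2 * τ1 + τ2)) := by positivity
  linarith

/-- For `θ̂` in the omnibus alternative region, the minimum weighted
squared distance to `Θ₀^{P/N,κ} = {0 < κ⁻¹θ₁ ≤ θ₂ ≤ κθ₁} ∪ {κθ₁ ≤ θ₂ ≤ κ⁻¹θ₁ < 0}`
equals `min{(θ̂₁ − κθ̂₂)²/(τ₁ + κ²τ₂), (κθ̂₁ − θ̂₂)²/(κ²τ₁ + τ₂)}`. -/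
theorem stmt6 (κ τ1 τ2 t1 t2 : ℝ) (hκ : 1 < κ) (hτ1 : 0 < τ1) (hτ2 : 0 < τ2)
    (halt : ¬((0 < κ⁻¹ * t1 ∧ κ⁻¹ * t1 ≤ t2 ∧ t2 ≤ κ * t1) ∨
              (κ * t1 ≤ t2 ∧ t2 ≤ κ⁻¹ * t1 ∧ κ⁻¹ * t1 < 0))) :
    sInf {d : ℝ | ∃ a1 a2 : ℝ,
        ((0 < κ⁻¹ * a1 ∧ κ⁻¹ * a1 ≤ a2 ∧ a2 ≤ κ * a1) ∨
         (κ * a1 ≤ a2 ∧ a2 ≤ κ⁻¹ * a1 ∧ κ⁻¹ * a1 < 0)) ∧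
        d = τ1⁻¹ * (t1 - a1) ^ 2 + τ2⁻¹ * (t2 - a2) ^ 2} =
      min ((t1 - κ * t2) ^ 2 / (τ1 + κ ^ 2 * τ2)) ((κ * t1 - t2) ^ 2 / (κ ^ 2 * τ1 + τ2)) := by
  have hκ0 : (0:ℝ) < κ := lt_trans one_pos hκ
  have hκi : (0:ℝ) < κ⁻¹ := inv_pos.mpr hκ0
  have hκκ : κ⁻¹ * κ = 1 := inv_mul_cancel₀ (ne_of_gt hκ0)
  have hκκ' : κ * κ⁻¹ = 1 := mul_inv_cancel₀ (ne_of_gt hκ0)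
  have hκ2 : 1 < κ * κ := by nlinarith
  have hκi1 : κ⁻¹ < κ := by nlinarith
  set S : Set ℝ := {d : ℝ | ∃ a1 a2 : ℝ,
        ((0 < κ⁻¹ * a1 ∧ κ⁻¹ * a1 ≤ a2 ∧ a2 ≤ κ * a1) ∨
         (κ * a1 ≤ a2 ∧ a2 ≤ κ⁻¹ * a1 ∧ κ⁻¹ * a1 < 0)) ∧
        d = τ1⁻¹ * (t1 - a1) ^ 2 + τ2⁻¹ * (t2 - a2) ^ 2} with hS
  -- membership helpers
  have mem1 : ∀ u : ℝ, u ≠ 0 → (τ1⁻¹ * (t1 - u) ^ 2 + τ2⁻¹ * (t2 - κ * u) ^ 2) ∈ S := by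
    intro u hu
    refine ⟨u, κ * u, ?_, rfl⟩
    rcases hu.lt_or_gt with h | h
    · exact Or.inr ⟨le_refl _, by nlinarith, mul_neg_of_pos_of_neg hκi h⟩
    · exact Or.inl ⟨mul_pos hκi h, by nlinarith, le_refl _⟩
  have mem2 : ∀ v : ℝ, v ≠ 0 → (τ1⁻¹ * (t1 - κ * v) ^ 2 + τ2⁻¹ * (t2 - v) ^ 2) ∈ S := by
    intro v hv
    have e : κ⁻¹ * (κ * v) = v := by rw [← mul_assoc, hκκ, one_mul]
    rcases hv.lt_or_gt with h | h
    · exact ⟨κ * v, v, Or.inr ⟨by nlinarith, e.ge, by rw [e]; exact h⟩, rfl⟩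
    · exact ⟨κ * v, v, Or.inl ⟨by rw [e]; exact h, e.le, by nlinarith⟩, rfl⟩
  have hbdd : BddBelow S := by
    refine ⟨0, fun d hd => ?_⟩
    obtain ⟨a1, a2, -, rfl⟩ := hd
    positivity
  have hne : S.Nonempty := ⟨_, mem1 1 one_ne_zero⟩
  have hg : (κ * t1 - t2) * (κ * t2 - t1) ≤ 0 := by
    by_contra h
    push_neg at h
    apply halt
    rcases mul_pos_iff.mp h with ⟨h1, h2⟩ | ⟨h1, h2⟩
    · have key : κ * (κ * t1 - t2) > 0 := mul_pos hκ0 h1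
      have ht1 : 0 < t1 := by nlinarith
      left
      have hl : κ⁻¹ * t1 ≤ κ⁻¹ * (κ * t2) :=
        mul_le_mul_of_nonneg_left (by linarith) hκi.le
      rw [← mul_assoc, hκκ, one_mul] at hl
      exact ⟨mul_pos hκi ht1, hl, by linarith⟩
    · have key : κ * (κ * t1 - t2) < 0 := mul_neg_of_pos_of_neg hκ0 h1
      have ht1 : t1 < 0 := by nlinarith
      right
      have hr : κ⁻¹ * (κ * t2) ≤ κ⁻¹ * t1 :=
        mul_le_mul_of_nonneg_left (by linarith) hκi.le
      rw [← mul_assoc, hκκ, one_mul] at hr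
      exact ⟨by linarith, hr, mul_neg_of_pos_of_neg hκi ht1⟩
  set d1 : ℝ := (t1 - κ * t2) ^ 2 / (τ1 + κ ^ 2 * τ2) with hd1
  set d2 : ℝ := (κ * t1 - t2) ^ 2 / (κ ^ 2 * τ1 + τ2) with hd2
  have ed : d1 = (κ * t2 - t1) ^ 2 / (κ ^ 2 * τ2 + τ1) := by
    rw [hd1, show (t1 - κ * t2) ^ 2 = (κ * t2 - t1) ^ 2 from by ring,
      show τ1 + κ ^ 2 * τ2 = κ ^ 2 * τ2 + τ1 from by ring]
  apply le_antisymm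
  · -- upper bound
    apply le_min
    · -- sInf S ≤ d1, using line (κ v, v)
      apply le_of_forall_pos_le_add
      intro ε hε
      set C : ℝ := τ2⁻¹ + κ ^ 2 * τ1⁻¹ with hC
      have hC0 : 0 < C := by positivity
      set v0 : ℝ := (τ1 * t2 + κ * τ2 * t1) / (τ1 + κ ^ 2 * τ2) with hv0
      have keyv : ∀ v : ℝ, τ1⁻¹ * (t1 - κ * v) ^ 2 + τ2⁻¹ * (t2 - v) ^ 2
          = d1 + C * (v - v0) ^ 2 := by
        intro v
        have h := key_id κ τ2 τ1 t2 t1 v hκ0 hτ2 hτ1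
        rw [ed, hC, hv0]
        linarith
      by_cases hv : v0 = 0
      · set v : ℝ := min 1 (ε / C) with hvdef
        have hvpos : 0 < v := lt_min one_pos (by positivity)
        have h1 : v ≤ 1 := min_le_left _ _
        have h2 : v ≤ ε / C := min_le_right _ _
        have hle : C * (v - v0) ^ 2 ≤ ε := by
          rw [hv, sub_zero]
          have hcv : C * v ≤ ε := by
            rw [← le_div_iff₀' hC0]; exact h2
          nlinarith
        calc sInf S ≤ τ1⁻¹ * (t1 - κ * v) ^ 2 + τ2⁻¹ * (t2 - v) ^ 2 :=
              csInf_le hbdd (mem2 v (ne_of_gt hvpos))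
          _ = d1 + C * (v - v0) ^ 2 := keyv v
          _ ≤ d1 + ε := by linarith
      · have : sInf S ≤ d1 := by
          have h := csInf_le hbdd (mem2 v0 hv)
          rw [keyv v0] at h
          simpa using h
        linarith
    · -- sInf S ≤ d2, using line (u, κ u)
      apply le_of_forall_pos_le_add
      intro ε hε
      set C : ℝ := τ1⁻¹ + κ ^ 2 * τ2⁻¹ with hC
      have hC0 : 0 < C := by positivity
      set u0 : ℝ := (τ2 * t1 + κ * τ1 * t2) / (τ2 + κ ^ 2 * τ1) with hu0
      have keyu : ∀ u : ℝ, τ1⁻¹ * (t1 - u) ^ 2 + τ2⁻¹ * (t2 - κ * u) ^ 2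
          = d2 + C * (u - u0) ^ 2 := by
        intro u
        have h := key_id κ τ1 τ2 t1 t2 u hκ0 hτ1 hτ2
        rw [hd2, hC, hu0]
        linarith
      by_cases hu : u0 = 0
      · set u : ℝ := min 1 (ε / C) with hudef
        have hupos : 0 < u := lt_min one_pos (by positivity)
        have h1 : u ≤ 1 := min_le_left _ _
        have h2 : u ≤ ε / C := min_le_right _ _
        have hle : C * (u - u0) ^ 2 ≤ ε := by
          rw [hu, sub_zero]
          have hcu : C * u ≤ ε := by
            rw [← le_div_iff₀' hC0]; exact h2
          nlinarith
        calc sInf S ≤ τ1⁻¹ * (t1 - u) ^ 2 + τ2⁻¹ * (t2 - κ * u) ^ 2 :=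
              csInf_le hbdd (mem1 u (ne_of_gt hupos))
          _ = d2 + C * (u - u0) ^ 2 := keyu u
          _ ≤ d2 + ε := by linarith
      · have : sInf S ≤ d2 := by
          have h := csInf_le hbdd (mem1 u0 hu)
          rw [keyu u0] at h
          simpa using h
        linarith
  · -- lower bound
    apply le_csInf hne
    rintro d ⟨a1, a2, ha, rfl⟩
    have hga : 0 ≤ (κ * a1 - a2) * (κ * a2 - a1) := by
      rcases ha with ⟨h0, hl, hr⟩ | ⟨hl, hr, h0⟩
      · have k1 : κ * (κ⁻¹ * a1) ≤ κ * a2 := mul_le_mul_of_nonneg_left hl hκ0.le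
        rw [← mul_assoc, hκκ', one_mul] at k1
        have k2 : 0 ≤ κ * a1 - a2 := by linarith
        have k3 : 0 ≤ κ * a2 - a1 := by linarith
        exact mul_nonneg k2 k3
      · have k1 : κ * a2 ≤ κ * (κ⁻¹ * a1) := mul_le_mul_of_nonneg_left hr hκ0.le
        rw [← mul_assoc, hκκ', one_mul] at k1
        have k2 : κ * a1 - a2 ≤ 0 := by linarith
        have k3 : κ * a2 - a1 ≤ 0 := by linarith
        rw [show (κ * a1 - a2) * (κ * a2 - a1)
            = (-(κ * a1 - a2)) * (-(κ * a2 - a1)) from by ring]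
        exact mul_nonneg (neg_nonneg.2 k2) (neg_nonneg.2 k3)
    have base1 : Continuous fun s : ℝ => t1 + s * (a1 - t1) :=
      continuous_const.add (continuous_id.mul continuous_const)
    have base2 : Continuous fun s : ℝ => t2 + s * (a2 - t2) :=
      continuous_const.add (continuous_id.mul continuous_const)
    have hFc : ContinuousOn (fun s : ℝ =>
        (κ * (t1 + s * (a1 - t1)) - (t2 + s * (a2 - t2))) *
        (κ * (t2 + s * (a2 - t2)) - (t1 + s * (a1 - t1)))) (Set.Icc 0 1) :=
      (((continuous_const.mul base1).sub base2).mul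
        ((continuous_const.mul base2).sub base1)).continuousOn
    have h0 : (fun s : ℝ =>
        (κ * (t1 + s * (a1 - t1)) - (t2 + s * (a2 - t2))) *
        (κ * (t2 + s * (a2 - t2)) - (t1 + s * (a1 - t1)))) 0 ≤ 0 := by
      simpa using hg
    have h1 : 0 ≤ (fun s : ℝ =>
        (κ * (t1 + s * (a1 - t1)) - (t2 + s * (a2 - t2))) *
        (κ * (t2 + s * (a2 - t2)) - (t1 + s * (a1 - t1)))) 1 := by
      simpa using hga
    obtain ⟨s, hs, hFs⟩ := intermediate_value_Icc (by norm_num : (0:ℝ) ≤ 1) hFc ⟨h0, h1⟩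
    obtain ⟨hs0, hs1⟩ := hs
    set b1 : ℝ := t1 + s * (a1 - t1) with hb1
    set b2 : ℝ := t2 + s * (a2 - t2) with hb2
    have hbzero : (κ * b1 - b2) * (κ * b2 - b1) = 0 := hFs
    have hbd : τ1⁻¹ * (t1 - b1) ^ 2 + τ2⁻¹ * (t2 - b2) ^ 2
        ≤ τ1⁻¹ * (t1 - a1) ^ 2 + τ2⁻¹ * (t2 - a2) ^ 2 := by
      have e1 : t1 - b1 = s * (t1 - a1) := by rw [hb1]; ring
      have e2 : t2 - b2 = s * (t2 - a2) := by rw [hb2]; ring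
      rw [e1, e2]
      have hs2 : s ^ 2 ≤ 1 := by
        rw [sq]
        nlinarith [mul_le_mul_of_nonneg_left hs1 hs0]
      have hrw : τ1⁻¹ * (s * (t1 - a1)) ^ 2 + τ2⁻¹ * (s * (t2 - a2)) ^ 2
          = s ^ 2 * (τ1⁻¹ * (t1 - a1) ^ 2 + τ2⁻¹ * (t2 - a2) ^ 2) := by ring
      rw [hrw]
      have hq : 0 ≤ τ1⁻¹ * (t1 - a1) ^ 2 + τ2⁻¹ * (t2 - a2) ^ 2 := by positivity
      calc s ^ 2 * (τ1⁻¹ * (t1 - a1) ^ 2 + τ2⁻¹ * (t2 - a2) ^ 2)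
          ≤ 1 * (τ1⁻¹ * (t1 - a1) ^ 2 + τ2⁻¹ * (t2 - a2) ^ 2) :=
            mul_le_mul_of_nonneg_right hs2 hq
        _ = τ1⁻¹ * (t1 - a1) ^ 2 + τ2⁻¹ * (t2 - a2) ^ 2 := one_mul _
    rcases mul_eq_zero.mp hbzero with hzb | hzb
    · -- κ b1 = b2 : distance at least d2
      have hcs := cs_ineq κ τ1 τ2 (t1 - b1) (t2 - b2) hτ1 hτ2
      have e : κ * (t1 - b1) - (t2 - b2) = κ * t1 - t2 := by linarith
      rw [e] at hcs
      refine le_trans (min_le_right _ _) ?_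
      rw [hd2]
      linarith
    · -- κ b2 = b1 : distance at least d1
      have hcs := cs_ineq κ τ2 τ1 (t2 - b2) (t1 - b1) hτ2 hτ1
      have e : κ * (t2 - b2) - (t1 - b1) = κ * t2 - t1 := by linarith
      rw [e] at hcs
      refine le_trans (min_le_left _ _) ?_
      rw [ed]
      linarith
end
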